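/- Let (A₁,A₂, l_{≻₁}, r_{≻₁}, l_{≺₁}, r_{≺₁}, l_{≻₂}, r_{≻₂}, l_{≺₂}, r_{≺₂}) be a matched pair of anti-dendriform algebras. Then (A₁, A₂, l_{≻₁}+l_{≺₁}, r_{≻₁}+r_{≺₁}, l_{≻₂}+l_{≺₂}, r_{≻₂}+r_{≺₂}) is a matched pair of the associated associative algebras (A₁,·₁) and (A₂,·₂). -/
import Mathlib


def IsLin (k : Type*) [Field k] {V W : Type*} [AddCommGroup V] [Module k V]
    [AddCommGroup W] [Module k W] (f : V → W) : Prop :=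
  ∀ (c : k) (u v : V), f (c • u + v) = c • f u + f v

def IsBilin (k : Type*) [Field k] {U V W : Type*} [AddCommGroup U] [Module k U]
    [AddCommGroup V] [Module k V] [AddCommGroup W] [Module k W]
    (f : U → V → W) : Prop :=
  (∀ x, IsLin k (f x)) ∧ (∀ y, IsLin k (fun x => f x y))

/-- An anti-dendriform algebra structure given by two bilinear operations `s` (≻) and `p` (≺). -/
def IsADAlg (k : Type*) [Field k] {A : Type*} [AddCommGroup A] [Module k A]
    (s p : A → A → A) : Prop :=
  IsBilin k s ∧ IsBilin k p ∧
  (∀ x y z, s x (s y z) = - s (s x y + p x y) z) ∧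
  (∀ x y z, s x (s y z) = - p x (s y z + p y z)) ∧
  (∀ x y z, s x (s y z) = p (p x y) z) ∧
  (∀ x y z, p (s x y) z = s x (p y z))

/-- A representation of an anti-dendriform algebra `(A, s, p)` on `V`. -/
def IsADRep (k : Type*) [Field k] {A V : Type*} [AddCommGroup A] [Module k A]
    [AddCommGroup V] [Module k V]
    (s p : A → A → A) (ls rs lp rp : A → V → V) : Prop :=
  IsBilin k ls ∧ IsBilin k rs ∧ IsBilin k lp ∧ IsBilin k rp ∧
  (∀ x y v, ls x (ls y v) = - ls (s x y + p x y) v) ∧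
  (∀ x y v, ls x (ls y v) = - lp x (ls y v + lp y v)) ∧
  (∀ x y v, ls x (ls y v) = lp (p x y) v) ∧
  (∀ x y v, rs (s x y) v = - rs y (rs x v + rp x v)) ∧
  (∀ x y v, rs (s x y) v = - rp (s x y + p x y) v) ∧
  (∀ x y v, rs (s x y) v = rp y (rp x v)) ∧
  (∀ x y v, ls x (rs y v) = - rs y (ls x v + lp x v)) ∧
  (∀ x y v, ls x (rs y v) = - lp x (rs y v + rp y v)) ∧
  (∀ x y v, ls x (rs y v) = rp y (lp x v)) ∧
  (∀ x y v, lp (s x y) v = ls x (lp y v)) ∧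
  (∀ x y v, rp y (rs x v) = rs (p x y) v) ∧
  (∀ x y v, rp y (ls x v) = ls x (rp y v))

/-- A representation (bimodule) of an associative algebra `(A, m)` on `V`. -/
def IsAssocRep (k : Type*) [Field k] {A V : Type*} [AddCommGroup A] [Module k A]
    [AddCommGroup V] [Module k V]
    (m : A → A → A) (l r : A → V → V) : Prop :=
  IsBilin k l ∧ IsBilin k r ∧
  (∀ x y v, l (m x y) v = l x (l y v)) ∧
  (∀ x y v, r (m x y) v = r y (r x v)) ∧
  (∀ x y v, r y (l x v) = l x (r y v))

/-- A matched pair of anti-dendriform algebras (conditions (M1)–(M12)). -/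
def IsADMatchedPair (k : Type*) [Field k] {A B : Type*} [AddCommGroup A] [Module k A]
    [AddCommGroup B] [Module k B]
    (s1 p1 : A → A → A) (s2 p2 : B → B → B)
    (ls1 rs1 lp1 rp1 : A → B → B) (ls2 rs2 lp2 rp2 : B → A → A) : Prop :=
  IsADRep k s1 p1 ls1 rs1 lp1 rp1 ∧
  IsADRep k s2 p2 ls2 rs2 lp2 rp2 ∧
  (∀ x y c, s1 x (rs2 c y) + rs2 (ls1 y c) x = - rs2 c (s1 x y + p1 x y)) ∧
  (∀ x y c, s1 x (rs2 c y) + rs2 (ls1 y c) x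
      = - p1 x (rs2 c y + rp2 c y) - rp2 (ls1 y c + lp1 y c) x) ∧
  (∀ x y c, s1 x (rs2 c y) + rs2 (ls1 y c) x = rp2 c (p1 x y)) ∧
  (∀ x z b, s1 x (ls2 b z) + rs2 (rs1 z b) x
      = - s1 (rs2 b x + rp2 b x) z - ls2 (ls1 x b + lp1 x b) z) ∧
  (∀ x z b, s1 x (ls2 b z) + rs2 (rs1 z b) x
      = - p1 x (ls2 b z + lp2 b z) - rp2 (rs1 z b + rp1 z b) x) ∧
  (∀ x z b, s1 x (ls2 b z) + rs2 (rs1 z b) x = p1 (rp2 b x) z + lp2 (lp1 x b) z) ∧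
  (∀ y z a, ls2 a (s1 y z) = - s1 (ls2 a y + lp2 a y) z - ls2 (rs1 y a + rp1 y a) z) ∧
  (∀ y z a, ls2 a (s1 y z) = - lp2 a (s1 y z + p1 y z)) ∧
  (∀ y z a, ls2 a (s1 y z) = p1 (lp2 a y) z + lp2 (rp1 y a) z) ∧
  (∀ x b c, ls1 x (s2 b c) = - s2 (ls1 x b + lp1 x b) c - ls1 (rs2 b x + rp2 b x) c) ∧
  (∀ x b c, ls1 x (s2 b c) = - lp1 x (s2 b c + p2 b c)) ∧
  (∀ x b c, ls1 x (s2 b c) = p2 (lp1 x b) c + lp1 (rp2 b x) c) ∧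
  (∀ y a c, s2 a (ls1 y c) + rs1 (rs2 c y) a
      = - s2 (rs1 y a + rp1 y a) c - ls1 (ls2 a y + lp2 a y) c) ∧
  (∀ y a c, s2 a (ls1 y c) + rs1 (rs2 c y) a
      = - p2 a (ls1 y c + lp1 y c) - rp1 (rs2 c y + rp2 c y) a) ∧
  (∀ y a c, s2 a (ls1 y c) + rs1 (rs2 c y) a = p2 (rp1 y a) c + lp1 (lp2 a y) c) ∧
  (∀ z a b, s2 a (rs1 z b) + rs1 (ls2 b z) a = - rs1 z (s2 a b + p2 a b)) ∧
  (∀ z a b, s2 a (rs1 z b) + rs1 (ls2 b z) a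
      = - p2 a (rs1 z b + rp1 z b) - rp1 (ls2 b z + lp2 b z) a) ∧
  (∀ z a b, s2 a (rs1 z b) + rs1 (ls2 b z) a = rp1 z (p2 a b)) ∧
  (∀ x y c, rp2 c (s1 x y) = s1 x (rp2 c y) + rs2 (lp1 y c) x) ∧
  (∀ x z b, p1 (rs2 b x) z + lp2 (ls1 x b) z = s1 x (lp2 b z) + rs2 (rp1 z b) x) ∧
  (∀ y z a, p1 (ls2 a y) z + lp2 (rs1 y a) z = ls2 a (p1 y z)) ∧
  (∀ x b c, p2 (ls1 x b) c + lp1 (rs2 b x) c = ls1 x (p2 b c)) ∧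
  (∀ y a c, p2 (rs1 y a) c + lp1 (ls2 a y) c = s2 a (lp1 y c) + rs1 (rp2 c y) a) ∧
  (∀ z a b, rp1 z (s2 a b) = s2 a (rp1 z b) + rs1 (lp2 b z) a)

/-- A matched pair of associative algebras. -/
def IsAssocMatchedPair (k : Type*) [Field k] {A B : Type*} [AddCommGroup A] [Module k A]
    [AddCommGroup B] [Module k B]
    (m1 : A → A → A) (m2 : B → B → B)
    (l1 r1 : A → B → B) (l2 r2 : B → A → A) : Prop :=
  (∀ x y z, m1 (m1 x y) z = m1 x (m1 y z)) ∧
  (∀ a b c, m2 (m2 a b) c = m2 a (m2 b c)) ∧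
  IsAssocRep k m1 l1 r1 ∧
  IsAssocRep k m2 l2 r2 ∧
  (∀ x a b, l1 x (m2 a b) = l1 (r2 a x) b + m2 (l1 x a) b) ∧
  (∀ x a b, r1 x (m2 a b) = r1 (l2 b x) a + m2 a (r1 x b)) ∧
  (∀ a x y, l2 a (m1 x y) = l2 (r1 x a) y + m1 (l2 a x) y) ∧
  (∀ a x y, r2 a (m1 x y) = r2 (l1 y a) x + m1 x (r2 a y)) ∧
  (∀ x a b, l1 (l2 a x) b + m2 (r1 x a) b - r1 (r2 b x) a - m2 a (l1 x b) = 0) ∧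
  (∀ x y a, l2 (l1 x a) y + m1 (r2 a x) y - r2 (r1 y a) x - m1 x (l2 a y) = 0)


private lemma lin_add {k : Type*} [Field k] {V W : Type*} [AddCommGroup V] [Module k V]
    [AddCommGroup W] [Module k W] {f : V → W} (h : IsLin k f) (u v : V) :
    f (u + v) = f u + f v := by
  have := h 1 u v; simpa using this

private lemma badd_r {k : Type*} [Field k] {U V W : Type*} [AddCommGroup U] [Module k U]
    [AddCommGroup V] [Module k V] [AddCommGroup W] [Module k W]
    {f : U → V → W} (h : IsBilin k f) (u : U) (v w : V) :
    f u (v + w) = f u v + f u w := lin_add (h.1 u) v w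

private lemma badd_l {k : Type*} [Field k] {U V W : Type*} [AddCommGroup U] [Module k U]
    [AddCommGroup V] [Module k V] [AddCommGroup W] [Module k W]
    {f : U → V → W} (h : IsBilin k f) (u v : U) (w : V) :
    f (u + v) w = f u w + f v w := lin_add (h.2 w) u v

private lemma bilin_add {k : Type*} [Field k] {U V W : Type*} [AddCommGroup U] [Module k U]
    [AddCommGroup V] [Module k V] [AddCommGroup W] [Module k W]
    {f g : U → V → W} (hf : IsBilin k f) (hg : IsBilin k g) :
    IsBilin k (fun x y => f x y + g x y) := by
  constructor
  · intro x c u v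
    simp only [hf.1 x c u v, hg.1 x c u v]
    module
  · intro y c u v
    show f (c • u + v) y + g (c • u + v) y = c • (f u y + g u y) + (f v y + g v y)
    rw [show f (c • u + v) y = c • f u y + f v y from hf.2 y c u v,
      show g (c • u + v) y = c • g u y + g v y from hg.2 y c u v]
    module

theorem stmt19 {k A B : Type*} [Field k] [AddCommGroup A] [Module k A]
    [AddCommGroup B] [Module k B]
    (s1 p1 : A → A → A) (s2 p2 : B → B → B)
    (ls1 rs1 lp1 rp1 : A → B → B) (ls2 rs2 lp2 rp2 : B → A → A)
    (h1 : IsADAlg k s1 p1) (h2 : IsADAlg k s2 p2)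
    (hmp : IsADMatchedPair k s1 p1 s2 p2 ls1 rs1 lp1 rp1 ls2 rs2 lp2 rp2) :
    IsAssocMatchedPair k
      (fun x y => s1 x y + p1 x y) (fun a b => s2 a b + p2 a b)
      (fun x b => ls1 x b + lp1 x b) (fun x b => rs1 x b + rp1 x b)
      (fun a x => ls2 a x + lp2 a x) (fun a x => rs2 a x + rp2 a x) := by
  obtain ⟨hbs1, hbp1, hA1, hA2, hA3, hA4⟩ := h1
  obtain ⟨hbs2, hbp2, hB1, hB2, hB3, hB4⟩ := h2
  obtain ⟨⟨hbls1, hbrs1, hblp1, hbrp1, q1, q2, q3, q4, q5, q6, q7, q8, q9, q10, q11, q12⟩,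
    ⟨hbls2, hbrs2, hblp2, hbrp2, w1, w2, w3, w4, w5, w6, w7, w8, w9, w10, w11, w12⟩,
    hC1, hC2, hC3, hC4, hC5, hC6, hC7, hC8, hC9, hC10, hC11, hC12, hC13, hC14, hC15,
    hC16, hC17, hC18, hC19, hC20, hC21, hC22, hC23, hC24⟩ := hmp
  refine ⟨?_, ?_, ⟨bilin_add hbls1 hblp1, bilin_add hbrs1 hbrp1, ?_, ?_, ?_⟩,
    ⟨bilin_add hbls2 hblp2, bilin_add hbrs2 hbrp2, ?_, ?_, ?_⟩, ?_, ?_, ?_, ?_, ?_, ?_⟩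
  · intro x y z
    have d1 := hA1 x y z
    have d2 := hA2 x y z
    have d3 := hA3 x y z
    have d4 := hA4 x y z
    simp only [badd_l hbs1, badd_r hbs1, badd_l hbp1, badd_r hbp1, badd_l hbs2, badd_r hbs2, badd_l hbp2, badd_r hbp2, badd_l hbls1, badd_r hbls1, badd_l hbrs1, badd_r hbrs1, badd_l hblp1, badd_r hblp1, badd_l hbrp1, badd_r hbrp1, badd_l hbls2, badd_r hbls2, badd_l hbrs2, badd_r hbrs2, badd_l hblp2, badd_r hblp2, badd_l hbrp2, badd_r hbrp2] at d1 d2 d3 d4 ⊢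
    linear_combination (norm := module) d1 - d2 - d3 + d4
  · intro x y z
    have d1 := hB1 x y z
    have d2 := hB2 x y z
    have d3 := hB3 x y z
    have d4 := hB4 x y z
    simp only [badd_l hbs1, badd_r hbs1, badd_l hbp1, badd_r hbp1, badd_l hbs2, badd_r hbs2, badd_l hbp2, badd_r hbp2, badd_l hbls1, badd_r hbls1, badd_l hbrs1, badd_r hbrs1, badd_l hblp1, badd_r hblp1, badd_l hbrp1, badd_r hbrp1, badd_l hbls2, badd_r hbls2, badd_l hbrs2, badd_r hbrs2, badd_l hblp2, badd_r hblp2, badd_l hbrp2, badd_r hbrp2] at d1 d2 d3 d4 ⊢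
    linear_combination (norm := module) d1 - d2 - d3 + d4
  · intro x y v
    have d1 := q1 x y v
    have d2 := q2 x y v
    have d3 := q3 x y v
    have d4 := q10 x y v
    simp only [badd_l hbs1, badd_r hbs1, badd_l hbp1, badd_r hbp1, badd_l hbs2, badd_r hbs2, badd_l hbp2, badd_r hbp2, badd_l hbls1, badd_r hbls1, badd_l hbrs1, badd_r hbrs1, badd_l hblp1, badd_r hblp1, badd_l hbrp1, badd_r hbrp1, badd_l hbls2, badd_r hbls2, badd_l hbrs2, badd_r hbrs2, badd_l hblp2, badd_r hblp2, badd_l hbrp2, badd_r hbrp2] at d1 d2 d3 d4 ⊢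
    linear_combination (norm := module) d1 - d2 - d3 + d4
  · intro x y v
    have d1 := q4 x y v
    have d2 := q5 x y v
    have d3 := q6 x y v
    have d4 := q11 x y v
    simp only [badd_l hbs1, badd_r hbs1, badd_l hbp1, badd_r hbp1, badd_l hbs2, badd_r hbs2, badd_l hbp2, badd_r hbp2, badd_l hbls1, badd_r hbls1, badd_l hbrs1, badd_r hbrs1, badd_l hblp1, badd_r hblp1, badd_l hbrp1, badd_r hbrp1, badd_l hbls2, badd_r hbls2, badd_l hbrs2, badd_r hbrs2, badd_l hblp2, badd_r hblp2, badd_l hbrp2, badd_r hbrp2] at d1 d2 d3 d4 ⊢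
    linear_combination (norm := module) - d1 + d2 + d3 - d4
  · intro x y v
    have d1 := q7 x y v
    have d2 := q8 x y v
    have d3 := q9 x y v
    have d4 := q12 x y v
    simp only [badd_l hbs1, badd_r hbs1, badd_l hbp1, badd_r hbp1, badd_l hbs2, badd_r hbs2, badd_l hbp2, badd_r hbp2, badd_l hbls1, badd_r hbls1, badd_l hbrs1, badd_r hbrs1, badd_l hblp1, badd_r hblp1, badd_l hbrp1, badd_r hbrp1, badd_l hbls2, badd_r hbls2, badd_l hbrs2, badd_r hbrs2, badd_l hblp2, badd_r hblp2, badd_l hbrp2, badd_r hbrp2] at d1 d2 d3 d4 ⊢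
    linear_combination (norm := module) d1 - d2 - d3 + d4
  · intro x y v
    have d1 := w1 x y v
    have d2 := w2 x y v
    have d3 := w3 x y v
    have d4 := w10 x y v
    simp only [badd_l hbs1, badd_r hbs1, badd_l hbp1, badd_r hbp1, badd_l hbs2, badd_r hbs2, badd_l hbp2, badd_r hbp2, badd_l hbls1, badd_r hbls1, badd_l hbrs1, badd_r hbrs1, badd_l hblp1, badd_r hblp1, badd_l hbrp1, badd_r hbrp1, badd_l hbls2, badd_r hbls2, badd_l hbrs2, badd_r hbrs2, badd_l hblp2, badd_r hblp2, badd_l hbrp2, badd_r hbrp2] at d1 d2 d3 d4 ⊢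
    linear_combination (norm := module) d1 - d2 - d3 + d4
  · intro x y v
    have d1 := w4 x y v
    have d2 := w5 x y v
    have d3 := w6 x y v
    have d4 := w11 x y v
    simp only [badd_l hbs1, badd_r hbs1, badd_l hbp1, badd_r hbp1, badd_l hbs2, badd_r hbs2, badd_l hbp2, badd_r hbp2, badd_l hbls1, badd_r hbls1, badd_l hbrs1, badd_r hbrs1, badd_l hblp1, badd_r hblp1, badd_l hbrp1, badd_r hbrp1, badd_l hbls2, badd_r hbls2, badd_l hbrs2, badd_r hbrs2, badd_l hblp2, badd_r hblp2, badd_l hbrp2, badd_r hbrp2] at d1 d2 d3 d4 ⊢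
    linear_combination (norm := module) - d1 + d2 + d3 - d4
  · intro x y v
    have d1 := w7 x y v
    have d2 := w8 x y v
    have d3 := w9 x y v
    have d4 := w12 x y v
    simp only [badd_l hbs1, badd_r hbs1, badd_l hbp1, badd_r hbp1, badd_l hbs2, badd_r hbs2, badd_l hbp2, badd_r hbp2, badd_l hbls1, badd_r hbls1, badd_l hbrs1, badd_r hbrs1, badd_l hblp1, badd_r hblp1, badd_l hbrp1, badd_r hbrp1, badd_l hbls2, badd_r hbls2, badd_l hbrs2, badd_r hbrs2, badd_l hblp2, badd_r hblp2, badd_l hbrp2, badd_r hbrp2] at d1 d2 d3 d4 ⊢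
    linear_combination (norm := module) d1 - d2 - d3 + d4
  · intro x a b
    have d1 := hC10 x a b
    have d2 := hC11 x a b
    have d3 := hC12 x a b
    have d4 := hC22 x a b
    simp only [badd_l hbs1, badd_r hbs1, badd_l hbp1, badd_r hbp1, badd_l hbs2, badd_r hbs2, badd_l hbp2, badd_r hbp2, badd_l hbls1, badd_r hbls1, badd_l hbrs1, badd_r hbrs1, badd_l hblp1, badd_r hblp1, badd_l hbrp1, badd_r hbrp1, badd_l hbls2, badd_r hbls2, badd_l hbrs2, badd_r hbrs2, badd_l hblp2, badd_r hblp2, badd_l hbrp2, badd_r hbrp2] at d1 d2 d3 d4 ⊢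
    linear_combination (norm := module) - d1 + d2 + d3 - d4
  · intro x a b
    have d1 := hC16 x a b
    have d2 := hC17 x a b
    have d3 := hC18 x a b
    have d4 := hC24 x a b
    simp only [badd_l hbs1, badd_r hbs1, badd_l hbp1, badd_r hbp1, badd_l hbs2, badd_r hbs2, badd_l hbp2, badd_r hbp2, badd_l hbls1, badd_r hbls1, badd_l hbrs1, badd_r hbrs1, badd_l hblp1, badd_r hblp1, badd_l hbrp1, badd_r hbrp1, badd_l hbls2, badd_r hbls2, badd_l hbrs2, badd_r hbrs2, badd_l hblp2, badd_r hblp2, badd_l hbrp2, badd_r hbrp2] at d1 d2 d3 d4 ⊢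
    linear_combination (norm := module) d1 - d2 - d3 + d4
  · intro a x y
    have d1 := hC7 x y a
    have d2 := hC8 x y a
    have d3 := hC9 x y a
    have d4 := hC21 x y a
    simp only [badd_l hbs1, badd_r hbs1, badd_l hbp1, badd_r hbp1, badd_l hbs2, badd_r hbs2, badd_l hbp2, badd_r hbp2, badd_l hbls1, badd_r hbls1, badd_l hbrs1, badd_r hbrs1, badd_l hblp1, badd_r hblp1, badd_l hbrp1, badd_r hbrp1, badd_l hbls2, badd_r hbls2, badd_l hbrs2, badd_r hbrs2, badd_l hblp2, badd_r hblp2, badd_l hbrp2, badd_r hbrp2] at d1 d2 d3 d4 ⊢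
    linear_combination (norm := module) - d1 + d2 + d3 - d4
  · intro a x y
    have d1 := hC1 x y a
    have d2 := hC2 x y a
    have d3 := hC3 x y a
    have d4 := hC19 x y a
    simp only [badd_l hbs1, badd_r hbs1, badd_l hbp1, badd_r hbp1, badd_l hbs2, badd_r hbs2, badd_l hbp2, badd_r hbp2, badd_l hbls1, badd_r hbls1, badd_l hbrs1, badd_r hbrs1, badd_l hblp1, badd_r hblp1, badd_l hbrp1, badd_r hbrp1, badd_l hbls2, badd_r hbls2, badd_l hbrs2, badd_r hbrs2, badd_l hblp2, badd_r hblp2, badd_l hbrp2, badd_r hbrp2] at d1 d2 d3 d4 ⊢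
    linear_combination (norm := module) d1 - d2 - d3 + d4
  · intro x a b
    have d1 := hC13 x a b
    have d2 := hC14 x a b
    have d3 := hC15 x a b
    have d4 := hC23 x a b
    simp only [badd_l hbs1, badd_r hbs1, badd_l hbp1, badd_r hbp1, badd_l hbs2, badd_r hbs2, badd_l hbp2, badd_r hbp2, badd_l hbls1, badd_r hbls1, badd_l hbrs1, badd_r hbrs1, badd_l hblp1, badd_r hblp1, badd_l hbrp1, badd_r hbrp1, badd_l hbls2, badd_r hbls2, badd_l hbrs2, badd_r hbrs2, badd_l hblp2, badd_r hblp2, badd_l hbrp2, badd_r hbrp2] at d1 d2 d3 d4 ⊢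
    linear_combination (norm := module) d1 - d2 - d3 + d4
  · intro x y a
    have d1 := hC4 x y a
    have d2 := hC5 x y a
    have d3 := hC6 x y a
    have d4 := hC20 x y a
    simp only [badd_l hbs1, badd_r hbs1, badd_l hbp1, badd_r hbp1, badd_l hbs2, badd_r hbs2, badd_l hbp2, badd_r hbp2, badd_l hbls1, badd_r hbls1, badd_l hbrs1, badd_r hbrs1, badd_l hblp1, badd_r hblp1, badd_l hbrp1, badd_r hbrp1, badd_l hbls2, badd_r hbls2, badd_l hbrs2, badd_r hbrs2, badd_l hblp2, badd_r hblp2, badd_l hbrp2, badd_r hbrp2] at d1 d2 d3 d4 ⊢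
    linear_combination (norm := module) d1 - d2 - d3 + d4
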